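/- Let (𝓜_k)_{k≥0}, (𝓕_k)_{k≥0}, (Q_k)_{k≥0} be sequences of nonnegative real numbers, let M₁, M₂ ≥ 0 and ρ_M, ρ_F ∈ (0, 1], and suppose: 𝓜₀ ≤ M₁Q₀ + 𝓕₀; for every k ≥ 1, 𝓜_k ≤ M₁Q_k + 𝓕_k + (1 - ρ_M)𝓜_{k-1}; for every k ≥ 0, 𝓕_k ≤ M₂·Σ_{l=0}^{k} (1 - ρ_F)^{k-l} Q_l; and Q̄ := sup_k Q_k < ∞. Then sup_k 𝓜_k ≤ (M₁/ρ_M + M₂/(ρ_M ρ_F))·Q̄. -/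

import Mathlib

/-- unrolling the MSEB recursion.  If `𝓜₀ ≤ M₁Q₀ + 𝓕₀`,
`𝓜_k ≤ M₁Q_k + 𝓕_k + (1-ρ_M)𝓜_{k-1}` for `k ≥ 1`,
`𝓕_k ≤ M₂ Σ_{l=0}^k (1-ρ_F)^{k-l} Q_l`, and `Q̄ = sup_k Q_k < ∞`, then
`sup_k 𝓜_k ≤ (M₁/ρ_M + M₂/(ρ_M ρ_F)) Q̄`. -/
theorem mseb_recursion_sup_bound
    (M F Q : ℕ → ℝ)
    (hMnn : ∀ k, 0 ≤ M k) (hFnn : ∀ k, 0 ≤ F k) (hQnn : ∀ k, 0 ≤ Q k)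
    (M₁ M₂ : ℝ) (hM₁ : 0 ≤ M₁) (hM₂ : 0 ≤ M₂)
    (ρM ρF : ℝ) (hρM : ρM ∈ Set.Ioc (0 : ℝ) 1) (hρF : ρF ∈ Set.Ioc (0 : ℝ) 1)
    (h0 : M 0 ≤ M₁ * Q 0 + F 0)
    (hrec : ∀ k, M (k + 1) ≤ M₁ * Q (k + 1) + F (k + 1) + (1 - ρM) * M k)
    (hF : ∀ k, F k ≤ M₂ * ∑ l ∈ Finset.range (k + 1), (1 - ρF) ^ (k - l) * Q l)
    (hQbdd : BddAbove (Set.range Q)) :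
    ∀ k, M k ≤ (M₁ / ρM + M₂ / (ρM * ρF)) * (⨆ l, Q l) := by
  obtain ⟨hρM0, hρM1⟩ := hρM
  obtain ⟨hρF0, hρF1⟩ := hρF
  set Qb := ⨆ l, Q l with hQb
  have hQle : ∀ k, Q k ≤ Qb := fun k => le_ciSup hQbdd k
  have hQbnn : 0 ≤ Qb := le_trans (hQnn 0) (hQle 0)
  have hx0 : (0:ℝ) ≤ 1 - ρF := by linarith
  have hx1 : 1 - ρF < 1 := by linarith
  -- geometric sum bound
  have hgeom : ∀ n : ℕ, ∑ j ∈ Finset.range n, (1 - ρF) ^ j ≤ 1 / ρF := by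
    intro n
    rw [le_div_iff₀ hρF0]
    nlinarith [geom_sum_mul (1 - ρF) n, pow_nonneg hx0 n]
  -- F bound
  have hFb : ∀ k, F k ≤ M₂ * (Qb / ρF) := by
    intro k
    refine le_trans (hF k) ?_
    apply mul_le_mul_of_nonneg_left ?_ hM₂
    have h1 : ∑ l ∈ Finset.range (k + 1), (1 - ρF) ^ (k - l) * Q l ≤
        ∑ l ∈ Finset.range (k + 1), (1 - ρF) ^ (k - l) * Qb := by
      apply Finset.sum_le_sum
      intro i _
      exact mul_le_mul_of_nonneg_left (hQle i) (pow_nonneg hx0 _)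
    refine le_trans h1 ?_
    rw [← Finset.sum_mul]
    have h2 : ∑ l ∈ Finset.range (k + 1), (1 - ρF) ^ (k - l) =
        ∑ j ∈ Finset.range (k + 1), (1 - ρF) ^ j := by
      rw [← Finset.sum_range_reflect (fun j => (1 - ρF) ^ j) (k + 1)]
      simp
    rw [h2]
    calc (∑ j ∈ Finset.range (k + 1), (1 - ρF) ^ j) * Qb
        ≤ (1 / ρF) * Qb := mul_le_mul_of_nonneg_right (hgeom _) hQbnn
      _ = Qb / ρF := by ring
  -- main induction: M k ≤ C with C := (M₁ + M₂/ρF) * Qb / ρM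
  set C := (M₁ + M₂ / ρF) * Qb / ρM with hC
  have hCeq : (M₁ / ρM + M₂ / (ρM * ρF)) * Qb = C := by
    field_simp [hC]
    rw [hC]
    field_simp
  have hstep : ∀ k, M k ≤ C := by
    intro k
    induction k with
    | zero =>
      have := h0
      have h1 : M₁ * Q 0 ≤ M₁ * Qb := mul_le_mul_of_nonneg_left (hQle 0) hM₁
      have h2 := hFb 0
      have hC' : (M₁ + M₂ / ρF) * Qb ≤ C := by
        rw [hC, le_div_iff₀ hρM0]
        nlinarith [mul_nonneg (add_nonneg hM₁ (div_nonneg hM₂ hρF0.le)) hQbnn]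
      have hM2div : M₂ * (Qb / ρF) = M₂ / ρF * Qb := by ring
      nlinarith
    | succ n ih =>
      have h1 : M₁ * Q (n + 1) ≤ M₁ * Qb := mul_le_mul_of_nonneg_left (hQle _) hM₁
      have h2 := hFb (n + 1)
      have h3 := hrec n
      have h4 : (1 - ρM) * M n ≤ (1 - ρM) * C := by
        apply mul_le_mul_of_nonneg_left ih (by linarith)
      have h5 : M₂ * (Qb / ρF) = M₂ / ρF * Qb := by ring
      have h6 : (M₁ + M₂ / ρF) * Qb = M₁ * Qb + M₂ / ρF * Qb := by ring
      have hCkey : ρM * C = (M₁ + M₂ / ρF) * Qb := by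
        rw [hC]
        field_simp
      nlinarith
  intro k
  rw [hCeq]
  exact hstep k
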